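/- Stallings' group S, i.e., the presented group ⟨a,b,c,d,s | [a,c], [a,d], [b,c], [b,d], (a⁻¹sa)(b⁻¹sb)⁻¹, (a⁻¹sa)(c⁻¹sc)⁻¹, (a⁻¹sa)(d⁻¹sd)⁻¹⟩, is isomorphic to the HNN extension of the group F = F(a,b) × F(c,d) over the subgroup K = ker φ with associated isomorphism the identity map of K (so the stable letter commutes with every element of K). -/

import Mathlib

/-- `F₂`, the free group on two generators. -/
abbrev F2 : Type := FreeGroup (Fin 2)

/-- `a`, a free generator of the first factor of `F₂ × F₂`. -/
def a : F2 × F2 := (FreeGroup.of 0, 1)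
/-- `b`, a free generator of the first factor of `F₂ × F₂`. -/
def b : F2 × F2 := (FreeGroup.of 1, 1)
/-- `c`, a free generator of the second factor of `F₂ × F₂`. -/
def c : F2 × F2 := (1, FreeGroup.of 0)
/-- `d`, a free generator of the second factor of `F₂ × F₂`. -/
def d : F2 × F2 := (1, FreeGroup.of 1)

/-- The free group on the five generators `a, b, c, d, s`. -/
abbrev F5 : Type := FreeGroup (Fin 5)

open scoped commutatorElement

/-- Relators of Stallings' group: `[a,c], [a,d], [b,c], [b,d]`,
`(a⁻¹sa)(b⁻¹sb)⁻¹, (a⁻¹sa)(c⁻¹sc)⁻¹, (a⁻¹sa)(d⁻¹sd)⁻¹`, where `a, b, c, d, s` are the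
generators `0, 1, 2, 3, 4` respectively. -/
def stallingsRels : Set F5 :=
  {⁅FreeGroup.of (0:Fin 5), FreeGroup.of 2⁆, ⁅FreeGroup.of (0:Fin 5), FreeGroup.of 3⁆,
    ⁅FreeGroup.of (1:Fin 5), FreeGroup.of 2⁆, ⁅FreeGroup.of (1:Fin 5), FreeGroup.of 3⁆,
    ((FreeGroup.of 0)⁻¹ * FreeGroup.of 4 * FreeGroup.of 0) *
      ((FreeGroup.of 1)⁻¹ * FreeGroup.of 4 * FreeGroup.of 1)⁻¹,
    ((FreeGroup.of 0)⁻¹ * FreeGroup.of 4 * FreeGroup.of 0) *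
      ((FreeGroup.of 2)⁻¹ * FreeGroup.of 4 * FreeGroup.of 2)⁻¹,
    ((FreeGroup.of 0)⁻¹ * FreeGroup.of 4 * FreeGroup.of 0) *
      ((FreeGroup.of 3)⁻¹ * FreeGroup.of 4 * FreeGroup.of 3)⁻¹}

namespace Stallings13

open Subgroup

/-- The subset `{ab⁻¹, ac⁻¹, ad⁻¹}` of `F₂ × F₂`. -/
def S : Set (F2 × F2) := {a * b⁻¹, a * c⁻¹, a * d⁻¹}

lemma pS : a * b⁻¹ ∈ S := Or.inl rfl
lemma qS : a * c⁻¹ ∈ S := Or.inr (Or.inl rfl)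
lemma rS : a * d⁻¹ ∈ S := Or.inr (Or.inr rfl)

lemma top_eq : Subgroup.closure ({a, b, c, d} : Set (F2 × F2)) = ⊤ := by
  rw [Subgroup.eq_top_iff']
  rintro ⟨u, v⟩
  have h1 : ∀ u : F2, ((u, 1) : F2 × F2) ∈ Subgroup.closure ({a, b, c, d} : Set (F2 × F2)) := by
    intro u
    induction u using FreeGroup.induction_on with
    | C1 => exact one_mem _
    | of i =>
      fin_cases i
      · exact Subgroup.subset_closure (by left; rfl)
      · exact Subgroup.subset_closure (by right; left; rfl)
    | inv_of i h => simpa using inv_mem h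
    | mul x y hx hy =>
      have : ((x * y, 1) : F2 × F2) = (x, 1) * (y, 1) := by simp [Prod.mul_def]
      rw [this]; exact mul_mem hx hy
  have h2 : ∀ v : F2, ((1, v) : F2 × F2) ∈ Subgroup.closure ({a, b, c, d} : Set (F2 × F2)) := by
    intro v
    induction v using FreeGroup.induction_on with
    | C1 => exact one_mem _
    | of i =>
      fin_cases i
      · exact Subgroup.subset_closure (by right; right; left; rfl)
      · exact Subgroup.subset_closure (by right; right; right; rfl)
    | inv_of i h => simpa using inv_mem h
    | mul x y hx hy =>
      have : ((1, x * y) : F2 × F2) = (1, x) * (1, y) := by simp [Prod.mul_def]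
      rw [this]; exact mul_mem hx hy
  have : ((u, v) : F2 × F2) = (u, 1) * (1, v) := by simp [Prod.mul_def]
  rw [this]; exact mul_mem (h1 u) (h2 v)

/-- Two homomorphisms out of `F₂ × F₂` agreeing on `a, b, c, d` are equal. -/
lemma homext {M : Type*} [Group M] {f g : F2 × F2 →* M}
    (h1 : f a = g a) (h2 : f b = g b) (h3 : f c = g c) (h4 : f d = g d) : f = g := by
  ext x
  have hx : x ∈ Subgroup.closure ({a, b, c, d} : Set (F2 × F2)) := by
    rw [top_eq]; exact mem_top x
  induction hx using Subgroup.closure_induction with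
  | mem y hy => rcases hy with rfl | rfl | rfl | rfl <;> assumption
  | one => simp
  | mul y z _ _ ihy ihz => simp [map_mul, ihy, ihz]
  | inv y _ ihy => simp [map_inv, ihy]

lemma mem_normalizer_of {G : Type*} [Group G] (s : Set G) (g : G)
    (h1 : ∀ x ∈ s, g * x * g⁻¹ ∈ Subgroup.closure s)
    (h2 : ∀ x ∈ s, g⁻¹ * x * g ∈ Subgroup.closure s) :
    g ∈ Subgroup.normalizer (Subgroup.closure s : Set G) := by
  have A : ∀ y ∈ Subgroup.closure s, g * y * g⁻¹ ∈ Subgroup.closure s := by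
    intro y hy
    induction hy using Subgroup.closure_induction with
    | mem z hz => exact h1 z hz
    | one => simpa using one_mem _
    | mul z w _ _ ihz ihw =>
      have h : g * (z * w) * g⁻¹ = g * z * g⁻¹ * (g * w * g⁻¹) := by group
      rw [h]; exact mul_mem ihz ihw
    | inv z _ ihz =>
      have h : g * z⁻¹ * g⁻¹ = (g * z * g⁻¹)⁻¹ := by group
      rw [h]; exact inv_mem ihz
  have B : ∀ y ∈ Subgroup.closure s, g⁻¹ * y * g ∈ Subgroup.closure s := by
    intro y hy
    induction hy using Subgroup.closure_induction with
    | mem z hz => exact h2 z hz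
    | one => simpa using one_mem _
    | mul z w _ _ ihz ihw =>
      have h : g⁻¹ * (z * w) * g = g⁻¹ * z * g * (g⁻¹ * w * g) := by group
      rw [h]; exact mul_mem ihz ihw
    | inv z _ ihz =>
      have h : g⁻¹ * z⁻¹ * g = (g⁻¹ * z * g)⁻¹ := by group
      rw [h]; exact inv_mem ihz
  rw [Subgroup.mem_normalizer_iff]
  intro h
  constructor
  · exact A h
  · intro hh
    have := B _ hh
    rwa [show g⁻¹ * (g * h * g⁻¹) * g = h from by group] at this

lemma Hnormal : (Subgroup.closure S).Normal := by
  rw [← Subgroup.normalizer_eq_top_iff, eq_top_iff, ← top_eq]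
  rw [Subgroup.closure_le]
  have hp := Subgroup.subset_closure pS
  have hq := Subgroup.subset_closure qS
  have hr := Subgroup.subset_closure rS
  rintro g (rfl | rfl | rfl | rfl)
  · -- g = a
    apply mem_normalizer_of
    · rintro x (rfl | rfl | rfl)
      · rw [show a * (a * b⁻¹) * a⁻¹ = (a * c⁻¹) * (a * b⁻¹) * (a * c⁻¹)⁻¹ from by
          refine Prod.ext ?_ ?_ <;> simp [a, b, c, d]]
        exact mul_mem (mul_mem hq hp) (inv_mem hq)
      · rw [show a * (a * c⁻¹) * a⁻¹ = a * c⁻¹ from by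
          refine Prod.ext ?_ ?_ <;> simp [a, b, c, d]]
        exact hq
      · rw [show a * (a * d⁻¹) * a⁻¹ = a * d⁻¹ from by
          refine Prod.ext ?_ ?_ <;> simp [a, b, c, d]]
        exact hr
    · rintro x (rfl | rfl | rfl)
      · rw [show a⁻¹ * (a * b⁻¹) * a = (a * c⁻¹)⁻¹ * (a * b⁻¹) * (a * c⁻¹) from by
          refine Prod.ext ?_ ?_ <;> simp [a, b, c, d]]
        exact mul_mem (mul_mem (inv_mem hq) hp) hq
      · rw [show a⁻¹ * (a * c⁻¹) * a = a * c⁻¹ from by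
          refine Prod.ext ?_ ?_ <;> simp [a, b, c, d]]
        exact hq
      · rw [show a⁻¹ * (a * d⁻¹) * a = a * d⁻¹ from by
          refine Prod.ext ?_ ?_ <;> simp [a, b, c, d]]
        exact hr
  · -- g = b
    have hw : (a * b⁻¹)⁻¹ * (a * c⁻¹) ∈ Subgroup.closure S := mul_mem (inv_mem hp) hq
    have hw' : (a * b⁻¹)⁻¹ * (a * d⁻¹) ∈ Subgroup.closure S := mul_mem (inv_mem hp) hr
    apply mem_normalizer_of
    · rintro x (rfl | rfl | rfl)
      · rw [show b * (a * b⁻¹) * b⁻¹ =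
            ((a * b⁻¹)⁻¹ * (a * c⁻¹)) * (a * b⁻¹) * ((a * b⁻¹)⁻¹ * (a * c⁻¹))⁻¹ from by
          refine Prod.ext ?_ ?_ <;> simp [a, b, c, d]]
        exact mul_mem (mul_mem hw hp) (inv_mem hw)
      · rw [show b * (a * c⁻¹) * b⁻¹ =
            ((a * b⁻¹)⁻¹ * (a * c⁻¹)) * (a * c⁻¹) * ((a * b⁻¹)⁻¹ * (a * c⁻¹))⁻¹ from by
          refine Prod.ext ?_ ?_ <;> simp [a, b, c, d]]
        exact mul_mem (mul_mem hw hq) (inv_mem hw)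
      · rw [show b * (a * d⁻¹) * b⁻¹ =
            ((a * b⁻¹)⁻¹ * (a * d⁻¹)) * (a * d⁻¹) * ((a * b⁻¹)⁻¹ * (a * d⁻¹))⁻¹ from by
          refine Prod.ext ?_ ?_ <;> simp [a, b, c, d]]
        exact mul_mem (mul_mem hw' hr) (inv_mem hw')
    · rintro x (rfl | rfl | rfl)
      · rw [show b⁻¹ * (a * b⁻¹) * b =
            ((a * b⁻¹)⁻¹ * (a * c⁻¹))⁻¹ * (a * b⁻¹) * ((a * b⁻¹)⁻¹ * (a * c⁻¹)) from by
          refine Prod.ext ?_ ?_ <;> simp [a, b, c, d]]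
        exact mul_mem (mul_mem (inv_mem hw) hp) hw
      · rw [show b⁻¹ * (a * c⁻¹) * b =
            ((a * b⁻¹)⁻¹ * (a * c⁻¹))⁻¹ * (a * c⁻¹) * ((a * b⁻¹)⁻¹ * (a * c⁻¹)) from by
          refine Prod.ext ?_ ?_ <;> simp [a, b, c, d]]
        exact mul_mem (mul_mem (inv_mem hw) hq) hw
      · rw [show b⁻¹ * (a * d⁻¹) * b =
            ((a * b⁻¹)⁻¹ * (a * d⁻¹))⁻¹ * (a * d⁻¹) * ((a * b⁻¹)⁻¹ * (a * d⁻¹)) from by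
          refine Prod.ext ?_ ?_ <;> simp [a, b, c, d]]
        exact mul_mem (mul_mem (inv_mem hw') hr) hw'
  · -- g = c
    apply mem_normalizer_of
    · rintro x (rfl | rfl | rfl)
      · rw [show c * (a * b⁻¹) * c⁻¹ = a * b⁻¹ from by
          refine Prod.ext ?_ ?_ <;> simp [a, b, c, d]]
        exact hp
      · rw [show c * (a * c⁻¹) * c⁻¹ = a * c⁻¹ from by
          refine Prod.ext ?_ ?_ <;> simp [a, b, c, d]]
        exact hq
      · rw [show c * (a * d⁻¹) * c⁻¹ = (a * c⁻¹)⁻¹ * (a * d⁻¹) * (a * c⁻¹) from by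
          refine Prod.ext ?_ ?_ <;> simp [a, b, c, d]]
        exact mul_mem (mul_mem (inv_mem hq) hr) hq
    · rintro x (rfl | rfl | rfl)
      · rw [show c⁻¹ * (a * b⁻¹) * c = a * b⁻¹ from by
          refine Prod.ext ?_ ?_ <;> simp [a, b, c, d]]
        exact hp
      · rw [show c⁻¹ * (a * c⁻¹) * c = a * c⁻¹ from by
          refine Prod.ext ?_ ?_ <;> simp [a, b, c, d]]
        exact hq
      · rw [show c⁻¹ * (a * d⁻¹) * c = (a * c⁻¹) * (a * d⁻¹) * (a * c⁻¹)⁻¹ from by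
          refine Prod.ext ?_ ?_ <;> simp [a, b, c, d]]
        exact mul_mem (mul_mem hq hr) (inv_mem hq)
  · -- g = d
    apply mem_normalizer_of
    · rintro x (rfl | rfl | rfl)
      · rw [show d * (a * b⁻¹) * d⁻¹ = a * b⁻¹ from by
          refine Prod.ext ?_ ?_ <;> simp [a, b, c, d]]
        exact hp
      · rw [show d * (a * c⁻¹) * d⁻¹ = (a * d⁻¹)⁻¹ * (a * c⁻¹) * (a * d⁻¹) from by
          refine Prod.ext ?_ ?_ <;> simp [a, b, c, d]]
        exact mul_mem (mul_mem (inv_mem hr) hq) hr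
      · rw [show d * (a * d⁻¹) * d⁻¹ = a * d⁻¹ from by
          refine Prod.ext ?_ ?_ <;> simp [a, b, c, d]]
        exact hr
    · rintro x (rfl | rfl | rfl)
      · rw [show d⁻¹ * (a * b⁻¹) * d = a * b⁻¹ from by
          refine Prod.ext ?_ ?_ <;> simp [a, b, c, d]]
        exact hp
      · rw [show d⁻¹ * (a * c⁻¹) * d = (a * d⁻¹) * (a * c⁻¹) * (a * d⁻¹)⁻¹ from by
          refine Prod.ext ?_ ?_ <;> simp [a, b, c, d]]
        exact mul_mem (mul_mem hr hq) (inv_mem hr)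
      · rw [show d⁻¹ * (a * d⁻¹) * d = a * d⁻¹ from by
          refine Prod.ext ?_ ?_ <;> simp [a, b, c, d]]
        exact hr

/-- The kernel of the total-exponent homomorphism is contained in the subgroup
generated by `ab⁻¹, ac⁻¹, ad⁻¹`. -/
lemma ker_le (φ : F2 × F2 →* Multiplicative ℤ)
    (ha : φ a = Multiplicative.ofAdd 1) (hb : φ b = Multiplicative.ofAdd 1)
    (hc : φ c = Multiplicative.ofAdd 1) (hd : φ d = Multiplicative.ofAdd 1) :
    φ.ker ≤ Subgroup.closure S := by
  have hn : (Subgroup.closure S).Normal := Hnormal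
  have hp := Subgroup.subset_closure pS
  have hq := Subgroup.subset_closure qS
  have hr := Subgroup.subset_closure rS
  set Q : F2 × F2 →* (F2 × F2) ⧸ Subgroup.closure S := QuotientGroup.mk' (Subgroup.closure S)
    with hQ
  have conj_mem : ∀ y ∈ Subgroup.closure S, a⁻¹ * y⁻¹ * a ∈ Subgroup.closure S := by
    intro y hy
    have := hn.conj_mem _ (inv_mem hy) a⁻¹
    rwa [show a⁻¹ * y⁻¹ * a⁻¹⁻¹ = a⁻¹ * y⁻¹ * a from by group] at this
  have qeq : ∀ g : F2 × F2, a * g⁻¹ ∈ Subgroup.closure S → Q g = Q a := by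
    intro g hg
    refine ((QuotientGroup.mk'_eq_mk' (Subgroup.closure S)).2 ⟨a⁻¹ * g, ?_, by group⟩).symm
    have := conj_mem _ hg
    rwa [show a⁻¹ * (a * g⁻¹)⁻¹ * a = a⁻¹ * g from by group] at this
  have key : Q = (zpowersHom _ (Q a)).comp φ := by
    apply homext
    · simp [ha, zpowersHom_apply]
    · rw [qeq b (by simpa using hp)]
      simp [hb, zpowersHom_apply]
    · rw [qeq c (by simpa using hq)]
      simp [hc, zpowersHom_apply]
    · rw [qeq d (by simpa using hr)]
      simp [hd, zpowersHom_apply]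
  intro g hg
  have h1 : Q g = 1 := by
    rw [key]
    simp [MonoidHom.mem_ker.1 hg]
  exact (QuotientGroup.eq_one_iff g).1 h1

/-- Generators of the presented Stallings group. -/
def x (i : Fin 5) : PresentedGroup stallingsRels := PresentedGroup.of i

lemma rel_one : ∀ r ∈ stallingsRels, PresentedGroup.mk stallingsRels r = 1 := fun r hr =>
  (QuotientGroup.eq_one_iff r).2 (Subgroup.subset_normalClosure hr)

lemma comm02 : Commute (x 0) (x 2) := by
  have := rel_one _ (show ⁅FreeGroup.of (0:Fin 5), FreeGroup.of 2⁆ ∈ stallingsRels from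
    Or.inl rfl)
  rw [map_commutatorElement] at this
  exact commutatorElement_eq_one_iff_commute.1 this

lemma comm03 : Commute (x 0) (x 3) := by
  have := rel_one _ (show ⁅FreeGroup.of (0:Fin 5), FreeGroup.of 3⁆ ∈ stallingsRels from
    Or.inr (Or.inl rfl))
  rw [map_commutatorElement] at this
  exact commutatorElement_eq_one_iff_commute.1 this

lemma comm12 : Commute (x 1) (x 2) := by
  have := rel_one _ (show ⁅FreeGroup.of (1:Fin 5), FreeGroup.of 2⁆ ∈ stallingsRels from
    Or.inr (Or.inr (Or.inl rfl)))
  rw [map_commutatorElement] at this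
  exact commutatorElement_eq_one_iff_commute.1 this

lemma comm13 : Commute (x 1) (x 3) := by
  have := rel_one _ (show ⁅FreeGroup.of (1:Fin 5), FreeGroup.of 3⁆ ∈ stallingsRels from
    Or.inr (Or.inr (Or.inr (Or.inl rfl))))
  rw [map_commutatorElement] at this
  exact commutatorElement_eq_one_iff_commute.1 this

lemma conj_eq (i : Fin 5)
    (h : ((FreeGroup.of 0)⁻¹ * FreeGroup.of 4 * FreeGroup.of 0) *
      ((FreeGroup.of i)⁻¹ * FreeGroup.of 4 * FreeGroup.of i)⁻¹ ∈ stallingsRels) :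
    (x 0)⁻¹ * x 4 * x 0 = (x i)⁻¹ * x 4 * x i := by
  have := rel_one _ h
  simp only [map_mul, map_inv] at this
  exact mul_inv_eq_one.1 this

lemma sconj (i : Fin 5)
    (h : (x 0)⁻¹ * x 4 * x 0 = (x i)⁻¹ * x 4 * x i) :
    Commute (x 4) (x 0 * (x i)⁻¹) :=
  show x 4 * (x 0 * (x i)⁻¹) = (x 0 * (x i)⁻¹) * x 4 from
    calc x 4 * (x 0 * (x i)⁻¹)
        = x 0 * ((x 0)⁻¹ * x 4 * x 0) * (x i)⁻¹ := by group
      _ = x 0 * ((x i)⁻¹ * x 4 * x i) * (x i)⁻¹ := by rw [h]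
      _ = (x 0 * (x i)⁻¹) * x 4 := by group

lemma scomm1 : Commute (x 4) (x 0 * (x 1)⁻¹) :=
  sconj 1 (conj_eq 1 (Or.inr (Or.inr (Or.inr (Or.inr (Or.inl rfl))))))
lemma scomm2 : Commute (x 4) (x 0 * (x 2)⁻¹) :=
  sconj 2 (conj_eq 2 (Or.inr (Or.inr (Or.inr (Or.inr (Or.inr (Or.inl rfl)))))))
lemma scomm3 : Commute (x 4) (x 0 * (x 3)⁻¹) :=
  sconj 3 (conj_eq 3 (Or.inr (Or.inr (Or.inr (Or.inr (Or.inr (Or.inr rfl)))))))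

/-- The map `F₂ → P` sending the generators to `x 0, x 1`. -/
def f1 : F2 →* PresentedGroup stallingsRels := FreeGroup.lift ![x 0, x 1]

/-- The map `F₂ → P` sending the generators to `x 2, x 3`. -/
def f2 : F2 →* PresentedGroup stallingsRels := FreeGroup.lift ![x 2, x 3]

lemma comm_f12 : ∀ u v : F2, Commute (f1 u) (f2 v) := by
  have base : ∀ i j : Fin 2, Commute (f1 (FreeGroup.of i)) (f2 (FreeGroup.of j)) := by
    intro i j
    fin_cases i <;> fin_cases j <;>
      simp only [f1, f2, FreeGroup.lift_apply_of, Matrix.cons_val_zero, Matrix.cons_val_one,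
        Matrix.head_cons]
    · exact comm02
    · exact comm03
    · exact comm12
    · exact comm13
  intro u v
  induction u using FreeGroup.induction_on with
  | C1 => simpa using Commute.one_left _
  | of i =>
    induction v using FreeGroup.induction_on with
    | C1 => simpa using Commute.one_right _
    | of j => exact base i j
    | inv_of j h => rw [map_inv]; exact h.inv_right
    | mul z w hz hw => rw [map_mul]; exact hz.mul_right hw
  | inv_of i h => rw [map_inv]; exact h.inv_left
  | mul z w hz hw => rw [map_mul]; exact hz.mul_left hw

/-- The map `F₂ × F₂ → P`. -/
def Φ : F2 × F2 →* PresentedGroup stallingsRels := f1.noncommCoprod f2 comm_f12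

lemma Φa : Φ a = x 0 := by
  simp [Φ, MonoidHom.noncommCoprod_apply, a, f1, f2]
lemma Φb : Φ b = x 1 := by
  simp [Φ, MonoidHom.noncommCoprod_apply, b, f1, f2]
lemma Φc : Φ c = x 2 := by
  simp [Φ, MonoidHom.noncommCoprod_apply, c, f1, f2]
lemma Φd : Φ d = x 3 := by
  simp [Φ, MonoidHom.noncommCoprod_apply, d, f1, f2]

lemma s_comm : ∀ g ∈ Subgroup.closure S, Commute (x 4) (Φ g) := by
  intro g hg
  induction hg using Subgroup.closure_induction with
  | mem y hy =>
    rcases hy with rfl | rfl | rfl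
    · rw [map_mul, map_inv, Φa, Φb]; exact scomm1
    · rw [map_mul, map_inv, Φa, Φc]; exact scomm2
    · rw [map_mul, map_inv, Φa, Φd]; exact scomm3
  | one => simpa using Commute.one_right _
  | mul y z _ _ ihy ihz => rw [map_mul]; exact ihy.mul_right ihz
  | inv y _ ihy => rw [map_inv]; exact ihy.inv_right

end Stallings13

open Stallings13 in
/-- Stallings' group, as presented by Gersten, is isomorphic to the HNN extension of
`F = F(a,b) × F(c,d)` over `K = ker φ` with associated isomorphism the identity of `K`. -/
theorem stmt_13 (φ : F2 × F2 →* Multiplicative ℤ)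
    (ha : φ a = Multiplicative.ofAdd 1) (hb : φ b = Multiplicative.ofAdd 1)
    (hc : φ c = Multiplicative.ofAdd 1) (hd : φ d = Multiplicative.ofAdd 1) :
    Nonempty
      (PresentedGroup stallingsRels ≃*
        HNNExtension (F2 × F2) φ.ker φ.ker (MulEquiv.refl φ.ker)) := by
  have hker := ker_le φ ha hb hc hd
  -- the map from the HNN extension to the presented group
  have hx : ∀ k : φ.ker,
      x 4 * Φ (k : F2 × F2) = Φ ((MulEquiv.refl φ.ker k : φ.ker) : F2 × F2) * x 4 := by
    intro k
    simpa using (s_comm (k : F2 × F2) (hker k.2)).eq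
  set Ψ : HNNExtension (F2 × F2) φ.ker φ.ker (MulEquiv.refl φ.ker) →*
      PresentedGroup stallingsRels := HNNExtension.lift Φ (x 4) hx with hΨ
  -- the map from the presented group to the HNN extension
  set f : Fin 5 → HNNExtension (F2 × F2) φ.ker φ.ker (MulEquiv.refl φ.ker) :=
    ![HNNExtension.of a, HNNExtension.of b, HNNExtension.of c, HNNExtension.of d,
      HNNExtension.t] with hf
  have hcomm : ∀ (i j : Fin 5) (u v : F2 × F2), f i = HNNExtension.of u →
      f j = HNNExtension.of v → u * v = v * u →
      FreeGroup.lift f ⁅FreeGroup.of i, FreeGroup.of j⁆ = 1 := by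
    intro i j u v hi hj huv
    rw [map_commutatorElement, commutatorElement_eq_one_iff_commute]
    show Commute (FreeGroup.lift f (FreeGroup.of i)) (FreeGroup.lift f (FreeGroup.of j))
    rw [FreeGroup.lift_apply_of, FreeGroup.lift_apply_of, hi, hj]
    show HNNExtension.of u * HNNExtension.of v = HNNExtension.of v * HNNExtension.of u
    rw [← map_mul, huv, map_mul]
  have ht : ∀ (i : Fin 5) (g : F2 × F2), φ g = Multiplicative.ofAdd 1 → f i = HNNExtension.of g →
      FreeGroup.lift f
        (((FreeGroup.of 0)⁻¹ * FreeGroup.of 4 * FreeGroup.of 0) *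
          ((FreeGroup.of i)⁻¹ * FreeGroup.of 4 * FreeGroup.of i)⁻¹) = 1 := by
    intro i g hg hfi
    have hta : HNNExtension.t * HNNExtension.of (a * g⁻¹) =
        HNNExtension.of (a * g⁻¹) *
          (HNNExtension.t : HNNExtension (F2 × F2) φ.ker φ.ker (MulEquiv.refl φ.ker)) := by
      have hk : a * g⁻¹ ∈ φ.ker := by
        rw [MonoidHom.mem_ker, map_mul, map_inv, ha, hg]
        simp
      simpa using HNNExtension.t_mul_of (φ := MulEquiv.refl φ.ker) ⟨a * g⁻¹, hk⟩
    rw [map_mul] at hta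
    simp only [map_mul, map_inv, FreeGroup.lift_apply_of, hfi]
    rw [map_inv] at hta
    rw [mul_inv_eq_one]
    show (f 0)⁻¹ * HNNExtension.t * f 0 =
      (HNNExtension.of g)⁻¹ * HNNExtension.t * HNNExtension.of g
    have hf0 : f 0 = HNNExtension.of a := rfl
    rw [hf0]
    calc (HNNExtension.of a)⁻¹ * HNNExtension.t * HNNExtension.of a
        = (HNNExtension.of a)⁻¹ *
            (HNNExtension.t * (HNNExtension.of a * (HNNExtension.of g)⁻¹)) *
            HNNExtension.of g := by group
      _ = (HNNExtension.of a)⁻¹ *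
            ((HNNExtension.of a * (HNNExtension.of g)⁻¹) * HNNExtension.t) *
            HNNExtension.of g := by rw [hta]
      _ = (HNNExtension.of g)⁻¹ * HNNExtension.t * HNNExtension.of g := by group
  have hrels : ∀ r ∈ stallingsRels,
      FreeGroup.lift f r = (1 : HNNExtension (F2 × F2) φ.ker φ.ker (MulEquiv.refl φ.ker)) := by
    intro r hr
    simp only [stallingsRels, Set.mem_insert_iff, Set.mem_singleton_iff] at hr
    rcases hr with rfl | rfl | rfl | rfl | rfl | rfl | rfl
    · exact hcomm 0 2 a c rfl rfl (by refine Prod.ext ?_ ?_ <;> simp [a, c])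
    · exact hcomm 0 3 a d rfl rfl (by refine Prod.ext ?_ ?_ <;> simp [a, d])
    · exact hcomm 1 2 b c rfl rfl (by refine Prod.ext ?_ ?_ <;> simp [b, c])
    · exact hcomm 1 3 b d rfl rfl (by refine Prod.ext ?_ ?_ <;> simp [b, d])
    · exact ht 1 b hb rfl
    · exact ht 2 c hc rfl
    · exact ht 3 d hd rfl
  set θ : PresentedGroup stallingsRels →*
      HNNExtension (F2 × F2) φ.ker φ.ker (MulEquiv.refl φ.ker) :=
    PresentedGroup.toGroup hrels with hθ
  have hθof : ∀ i : Fin 5, θ (PresentedGroup.of i) = f i := fun i =>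
    PresentedGroup.toGroup.of hrels
  have hΨof : ∀ g : F2 × F2, Ψ (HNNExtension.of g) = Φ g := fun g =>
    HNNExtension.lift_of Φ (x 4) hx g
  have h1 : Ψ.comp θ = MonoidHom.id _ := by
    refine PresentedGroup.ext fun i => ?_
    rw [MonoidHom.comp_apply, MonoidHom.id_apply, hθof]
    fin_cases i
    · show Ψ (HNNExtension.of a) = _; rw [hΨof, Φa]; rfl
    · show Ψ (HNNExtension.of b) = _; rw [hΨof, Φb]; rfl
    · show Ψ (HNNExtension.of c) = _; rw [hΨof, Φc]; rfl
    · show Ψ (HNNExtension.of d) = _; rw [hΨof, Φd]; rfl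
    · show Ψ HNNExtension.t = _
      rw [hΨ, HNNExtension.lift_t]; rfl
  have h2 : θ.comp Ψ = MonoidHom.id _ := by
    refine HNNExtension.hom_ext ?_ ?_
    · refine homext ?_ ?_ ?_ ?_ <;>
        rw [MonoidHom.comp_apply, MonoidHom.comp_apply, MonoidHom.comp_apply, hΨof,
          MonoidHom.id_apply]
      · rw [Φa]; exact hθof 0
      · rw [Φb]; exact hθof 1
      · rw [Φc]; exact hθof 2
      · rw [Φd]; exact hθof 3
    · rw [MonoidHom.comp_apply, MonoidHom.id_apply, hΨ, HNNExtension.lift_t]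
      exact hθof 4
  exact ⟨MonoidHom.toMulEquiv θ Ψ h1 h2⟩
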